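/- Fix N ≥ 1, ĝ ∈ ℂ^N, ε > 0, σ² > 0, Γ > 0, and for Hermitian W̄, V̄ ∈ ℂ^{N×N} and ξ, δ ∈ ℝ define the (N+1)×(N+1) Hermitian matrix S(W̄, V̄, ξ, δ) = [[δ I_N + V̄ − W̄/Γ, (V̄ − W̄/Γ) ĝ],[ĝᴴ (V̄ − W̄/Γ), −δ ε² + ξ σ² + ĝᴴ (V̄ − W̄/Γ) ĝ]]. Then for every Hermitian S ∈ ℂ^{N×N}: S(W̄ − S, V̄ + S, ξ, δ) = S(W̄, V̄, ξ, δ) + (1 + 1/Γ) U_ĝᴴ S U_ĝ, where U_ĝ = [I_N ĝ] ∈ ℂ^{N×(N+1)}. Consequently, if S is positive semidefinite and S(W̄, V̄, ξ, δ) is positive semidefinite, then S(W̄ − S, V̄ + S, ξ, δ) is positive semidefinite. -/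

import Mathlib

open Matrix
open scoped ComplexOrder

/-- `U_ĝ = [I_N  ĝ]`, the `N×(N+1)` matrix whose first `N` columns form `I_N` and whose
last column is `ĝ`. -/
noncomputable def Ug {N : ℕ} (ghat : Fin N → ℂ) : Matrix (Fin N) (Fin N ⊕ Unit) ℂ :=
  Matrix.fromCols (1 : Matrix (Fin N) (Fin N) ℂ) (Matrix.replicateCol Unit ghat)

/-- The LMI matrix
`S(W̄, V̄, ξ, δ) = [[δ I_N + V̄ − W̄/Γ, (V̄ − W̄/Γ) ĝ],[ĝᴴ (V̄ − W̄/Γ), −δ ε² + ξ σ² + ĝᴴ (V̄ − W̄/Γ) ĝ]]`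
for the robust eavesdropper-SINR constraint C̄2. -/
noncomputable def SC2 {N : ℕ} (ghat : Fin N → ℂ) (ε σ2 Γ : ℝ)
    (W V : Matrix (Fin N) (Fin N) ℂ) (ξ δ : ℝ) : Matrix (Fin N ⊕ Unit) (Fin N ⊕ Unit) ℂ :=
  Matrix.fromBlocks
    ((δ : ℂ) • (1 : Matrix (Fin N) (Fin N) ℂ) + (V - (Γ : ℂ)⁻¹ • W))
    (Matrix.replicateCol Unit ((V - (Γ : ℂ)⁻¹ • W) *ᵥ ghat))
    (Matrix.replicateRow Unit (star ghat ᵥ* (V - (Γ : ℂ)⁻¹ • W)))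
    (Matrix.of fun _ _ =>
      (-(δ * ε ^ 2) + ξ * σ2 : ℂ) + star ghat ⬝ᵥ (V - (Γ : ℂ)⁻¹ • W) *ᵥ ghat)

lemma Ug_sandwich {N : ℕ} (ghat : Fin N → ℂ) (S : Matrix (Fin N) (Fin N) ℂ) :
    (Ug ghat)ᴴ * S * Ug ghat =
      Matrix.fromBlocks S (Matrix.replicateCol Unit (S *ᵥ ghat)) (Matrix.replicateRow Unit (star ghat ᵥ* S))
        (Matrix.of fun _ _ => star ghat ⬝ᵥ S *ᵥ ghat) := by
  ext i j
  cases i <;> cases j <;>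
    simp [Ug, Matrix.mul_apply, Matrix.fromCols, Matrix.fromBlocks, Fintype.sum_sum_type,
      Matrix.mulVec, Matrix.vecMul, dotProduct, Matrix.one_apply, Finset.mul_sum,
      Finset.sum_mul, mul_comm, mul_assoc, mul_left_comm]
  rw [Finset.sum_comm]


lemma vecMul_smul_right {n m : Type*} [Fintype n] (v : n → ℂ) (c : ℂ) (A : Matrix n m ℂ) :
    v ᵥ* (c • A) = c • (v ᵥ* A) := by
  ext j
  simp [Matrix.vecMul, dotProduct, Finset.mul_sum, mul_comm, mul_assoc, mul_left_comm]

lemma psd_smul_of_nonneg {n : Type*} [Fintype n] {M : Matrix n n ℂ} (hM : M.PosSemidef)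
    {c : ℂ} (hc : 0 ≤ c) : (c • M).PosSemidef := by
  have him : star c = c := by
    rw [Complex.star_def, Complex.conj_eq_iff_im]
    exact ((Complex.le_def.mp hc).2).symm
  constructor
  · rw [Matrix.IsHermitian, Matrix.conjTranspose_smul, hM.1.eq, him]
  · intro x
    exact ((hM.smul hc).2 x)

/-- Shifting a PSD part `S` from the beamforming matrix to the artificial-noise covariance
matrix transforms the LMI matrix by adding `(1 + 1/Γ) U_ĝᴴ S U_ĝ`; in particular it
preserves positive semidefiniteness of the LMI. -/
theorem lmi_shift_identity {N : ℕ} (hN : 1 ≤ N) (ghat : Fin N → ℂ) (ε σ2 Γ : ℝ)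
    (hε : 0 < ε) (hσ : 0 < σ2) (hΓ : 0 < Γ)
    (W V S : Matrix (Fin N) (Fin N) ℂ) (hW : W.IsHermitian) (hV : V.IsHermitian)
    (hS : S.IsHermitian) (ξ δ : ℝ) :
    SC2 ghat ε σ2 Γ (W - S) (V + S) ξ δ =
      SC2 ghat ε σ2 Γ W V ξ δ + ((1 : ℂ) + (Γ : ℂ)⁻¹) • ((Ug ghat)ᴴ * S * Ug ghat) ∧
    (S.PosSemidef → (SC2 ghat ε σ2 Γ W V ξ δ).PosSemidef →
      (SC2 ghat ε σ2 Γ (W - S) (V + S) ξ δ).PosSemidef) := by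
  have key : SC2 ghat ε σ2 Γ (W - S) (V + S) ξ δ =
      SC2 ghat ε σ2 Γ W V ξ δ + ((1 : ℂ) + (Γ : ℂ)⁻¹) • ((Ug ghat)ᴴ * S * Ug ghat) := by
    rw [Ug_sandwich]
    have hT : (V + S) - (Γ : ℂ)⁻¹ • (W - S) =
        (V - (Γ : ℂ)⁻¹ • W) + ((1 : ℂ) + (Γ : ℂ)⁻¹) • S := by module
    ext i j
    cases i <;> cases j <;>
      simp [SC2, hT, Matrix.fromBlocks, Matrix.add_mulVec, Matrix.smul_mulVec,
        Matrix.add_vecMul, Matrix.vecMul_add, vecMul_smul_right, dotProduct_add, dotProduct_smul,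
        smul_eq_mul] <;> ring
  refine ⟨key, fun hSpsd hpsd => ?_⟩
  rw [key]
  refine hpsd.add (psd_smul_of_nonneg (hSpsd.conjTranspose_mul_mul_same (Ug ghat)) ?_)
  have : (0:ℝ) ≤ 1 + Γ⁻¹ := by positivity
  rw [show ((1:ℂ) + (Γ:ℂ)⁻¹) = ((1 + Γ⁻¹ : ℝ) : ℂ) by push_cast; ring]
  exact_mod_cast this
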